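/- (Alexandrov–Zeeman) Let n ≥ 3. Let F : ℝⁿ → ℝⁿ be a bijection such that for all p, q ∈ ℝⁿ: if p > q then F(p) > F(q), and if p > q then F⁻¹(p) > F⁻¹(q), where p > q means that p − q is timelike and future-pointing. Then F is the composition of an orthochronous Poincaré transformation with a dilation: there exist λ > 0, a vector m ∈ ℝⁿ, and a linear map Λ : ℝⁿ → ℝⁿ satisfying g(Λv, Λw) = g(v, w) for all v, w and mapping future-pointing timelike vectors to future-pointing timelike vectors, such that F(p) = λ·Λ(p) + m for all p ∈ ℝⁿ. -/

import Mathlib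

/-- The Minkowski bilinear form of signature `(1, n-1)` on `ℝⁿ`:
`g v w = v⁰w⁰ - ∑_{i=1}^{n-1} vⁱwⁱ`. -/
noncomputable def minkG {n : ℕ} (v w : Fin n → ℝ) : ℝ :=
  ∑ i : Fin n, if (i : ℕ) = 0 then v i * w i else -(v i * w i)

/-- `v` is timelike and future pointing: `g(v,v) > 0` and `v⁰ > 0`. -/
def FutureTimelike {n : ℕ} (v : Fin (n + 1) → ℝ) : Prop :=
  0 < minkG v v ∧ 0 < v 0

namespace AZ

variable {n : ℕ}

/-- spatial part, as a Euclidean space vector -/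
noncomputable def sp (v : Fin (n+1) → ℝ) : EuclideanSpace ℝ (Fin (n+1)) :=
  WithLp.toLp 2 (fun i => if (i : ℕ) = 0 then 0 else v i)

lemma inner_sp (v w : Fin (n+1) → ℝ) :
    (inner ℝ (sp v) (sp w) : ℝ) = ∑ i : Fin (n+1), if (i : ℕ) = 0 then 0 else v i * w i := by
  rw [PiLp.inner_apply]
  refine Finset.sum_congr rfl fun i _ => ?_
  simp only [sp, RCLike.inner_apply, conj_trivial]
  split_ifs <;> ring

lemma minkG_eq (v w : Fin (n+1) → ℝ) :
    minkG v w = v 0 * w 0 - (inner ℝ (sp v) (sp w) : ℝ) := by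
  rw [inner_sp, minkG, Finset.sum_ite, Finset.sum_ite, eq_sub_iff_add_eq]
  have h : Finset.filter (fun i : Fin (n+1) => (i:ℕ) = 0) Finset.univ = {0} := by
    ext i; simp
  rw [h]
  simp only [Finset.sum_singleton, Finset.sum_const_zero, Finset.sum_neg_distrib]; ring

lemma minkG_comm (v w : Fin (n+1) → ℝ) : minkG v w = minkG w v := by
  unfold minkG; refine Finset.sum_congr rfl fun i _ => ?_; split <;> ring

lemma sp_add (v w : Fin (n+1) → ℝ) : sp (v + w) = sp v + sp w := by
  ext i; by_cases hi : i = 0 <;> simp [sp, hi]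

lemma sp_smul (c : ℝ) (v : Fin (n+1) → ℝ) : sp (c • v) = c • sp v := by
  ext i; by_cases hi : i = 0 <;> simp [sp, hi]

lemma sp_neg (v : Fin (n+1) → ℝ) : sp (-v) = -(sp v) := by
  ext i; by_cases hi : i = 0 <;> simp [sp, hi]

lemma minkG_add_left (u v w : Fin (n+1) → ℝ) :
    minkG (u + v) w = minkG u w + minkG v w := by
  simp only [minkG_eq, sp_add, inner_add_left, Pi.add_apply]; ring

lemma minkG_add_right (u v w : Fin (n+1) → ℝ) :
    minkG u (v + w) = minkG u v + minkG u w := by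
  rw [minkG_comm, minkG_add_left, minkG_comm v u, minkG_comm w u]

lemma minkG_smul_left (c : ℝ) (v w : Fin (n+1) → ℝ) :
    minkG (c • v) w = c * minkG v w := by
  simp only [minkG_eq, sp_smul, inner_smul_left, Pi.smul_apply, smul_eq_mul, conj_trivial]; ring

lemma minkG_smul_right (c : ℝ) (v w : Fin (n+1) → ℝ) :
    minkG v (c • w) = c * minkG v w := by
  rw [minkG_comm, minkG_smul_left, minkG_comm]

lemma minkG_neg_left (v w : Fin (n+1) → ℝ) : minkG (-v) w = - minkG v w := by
  simp only [minkG_eq, sp_neg, inner_neg_left, Pi.neg_apply]; ring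

lemma minkG_neg_right (v w : Fin (n+1) → ℝ) : minkG v (-w) = - minkG v w := by
  rw [minkG_comm, minkG_neg_left, minkG_comm]

lemma minkG_sub_left (u v w : Fin (n+1) → ℝ) :
    minkG (u - v) w = minkG u w - minkG v w := by
  rw [sub_eq_add_neg, minkG_add_left, minkG_neg_left]; ring

lemma minkG_sub_right (u v w : Fin (n+1) → ℝ) :
    minkG u (v - w) = minkG u v - minkG u w := by
  rw [minkG_comm, minkG_sub_left, minkG_comm v u, minkG_comm w u]

lemma minkG_expand (p q : Fin (n+1) → ℝ) (s t : ℝ) :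
    minkG (p + s • q) (p + t • q)
      = minkG p p + (s + t) * minkG p q + (s * t) * minkG q q := by
  simp only [minkG_add_left, minkG_add_right, minkG_smul_left, minkG_smul_right,
    minkG_comm q p]
  ring

lemma minkG_self (v : Fin (n+1) → ℝ) : minkG v v = v 0 ^ 2 - ‖sp v‖ ^ 2 := by
  rw [minkG_eq, real_inner_self_eq_norm_sq]; ring

/-- if a vector has zeroth coordinate 0 and zero spatial part, it is 0 -/
lemma eq_zero_of (v : Fin (n+1) → ℝ) (h0 : v 0 = 0) (hs : sp v = 0) : v = 0 := by
  funext i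
  by_cases hi : (i : ℕ) = 0
  · have : i = 0 := Fin.ext hi
    rw [this, h0]; rfl
  · have := congrFun (congrArg WithLp.ofLp hs) i
    simpa [sp, Fin.val_eq_zero_iff.not.mp hi] using this


def Causal (v : Fin (n+1) → ℝ) : Prop := 0 ≤ minkG v v ∧ 0 ≤ v 0

def NullF (v : Fin (n+1) → ℝ) : Prop := minkG v v = 0 ∧ 0 < v 0

lemma ft_norm {v : Fin (n+1) → ℝ} (h : FutureTimelike v) : ‖sp v‖ < v 0 := by
  rcases h with ⟨hq, h0⟩
  rw [minkG_self] at hq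
  by_contra hc
  push_neg at hc
  nlinarith [norm_nonneg (sp v)]

lemma causal_norm {v : Fin (n+1) → ℝ} (h : Causal v) : ‖sp v‖ ≤ v 0 := by
  rcases h with ⟨hq, h0⟩
  rw [minkG_self] at hq
  by_contra hc
  push_neg at hc
  nlinarith [norm_nonneg (sp v)]

lemma minkG_nonneg_of {v w : Fin (n+1) → ℝ} (hv : FutureTimelike v) (hw : Causal w) :
    0 ≤ minkG v w := by
  have h1 := real_inner_le_norm (sp v) (sp w)
  have h2 := ft_norm hv
  have h3 := causal_norm hw
  have h4 := norm_nonneg (sp v)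
  have h5 := norm_nonneg (sp w)
  rw [minkG_eq]
  nlinarith

lemma sp_eq_zero_of_norm {v : Fin (n+1) → ℝ} (h : ‖sp v‖ = 0) : sp v = 0 :=
  norm_eq_zero.mp h

lemma minkG_pos_of {v w : Fin (n+1) → ℝ} (hv : FutureTimelike v) (hw : Causal w)
    (hw0 : w ≠ 0) : 0 < minkG v w := by
  have h3 := causal_norm hw
  have hw0' : 0 < w 0 := by
    rcases lt_or_eq_of_le hw.2 with h | h
    · exact h
    · exfalso
      apply hw0
      apply eq_zero_of w h.symm
      apply sp_eq_zero_of_norm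
      have := norm_nonneg (sp w)
      linarith [h3, h.symm ▸ h3]
  have h1 := real_inner_le_norm (sp v) (sp w)
  have h2 := ft_norm hv
  have h4 := norm_nonneg (sp v)
  have h5 := norm_nonneg (sp w)
  rw [minkG_eq]
  nlinarith

lemma ft_add_causal {v w : Fin (n+1) → ℝ} (hv : FutureTimelike v) (hw : Causal w) :
    FutureTimelike (v + w) := by
  have h1 := minkG_nonneg_of hv hw
  constructor
  · rw [minkG_add_left, minkG_add_right, minkG_add_right, minkG_comm w v]
    nlinarith [hv.1, hw.1]
  · have : (v + w) 0 = v 0 + w 0 := rfl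
    rw [this]; linarith [hv.2, hw.2]

lemma null_coord_ne {v : Fin (n+1) → ℝ} (hq : minkG v v = 0) (hv : v ≠ 0) : v 0 ≠ 0 := by
  intro h0
  apply hv
  rw [minkG_self, h0] at hq
  apply eq_zero_of v h0
  apply sp_eq_zero_of_norm
  nlinarith [norm_nonneg (sp v)]

lemma timelike_coord_ne {v : Fin (n+1) → ℝ} (hq : 0 < minkG v v) : v 0 ≠ 0 := by
  intro h0
  rw [minkG_self, h0] at hq
  nlinarith [norm_nonneg (sp v)]

lemma norm_sp_of_null {v : Fin (n+1) → ℝ} (hq : minkG v v = 0) : ‖sp v‖ = |v 0| := by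
  rw [minkG_self] at hq
  have : ‖sp v‖ ^ 2 = (v 0) ^ 2 := by linarith
  calc ‖sp v‖ = √(‖sp v‖ ^ 2) := by rw [Real.sqrt_sq (norm_nonneg _)]
    _ = √((v 0) ^ 2) := by rw [this]
    _ = |v 0| := Real.sqrt_sq_eq_abs _

lemma orth_null_nonpos {a w : Fin (n+1) → ℝ} (ha : minkG a a = 0) (ha0 : a ≠ 0)
    (h : minkG w a = 0) : minkG w w ≤ 0 := by
  have hna := norm_sp_of_null ha
  have ha0' := null_coord_ne ha ha0
  have hip : (inner ℝ (sp w) (sp a) : ℝ) = w 0 * a 0 := by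
    rw [minkG_eq] at h; linarith
  have habs := abs_real_inner_le_norm (sp w) (sp a)
  rw [hip, hna, abs_mul] at habs
  have : |w 0| ≤ ‖sp w‖ := by
    rcases abs_pos.mpr ha0' with hpos
    exact le_of_mul_le_mul_right habs hpos
  rw [minkG_self]
  nlinarith [abs_nonneg (w 0), sq_abs (w 0)]

lemma prop_aux {a b : Fin (n+1) → ℝ} (ha : minkG a a = 0) (hb : minkG b b = 0)
    (hab : minkG a b = 0) (hs : 0 < a 0 * b 0) : b = (b 0 / a 0) • a := by
  have hna := norm_sp_of_null ha
  have hnb := norm_sp_of_null hb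
  have ha0 : a 0 ≠ 0 := fun h => by rw [h] at hs; simp at hs
  have hb0 : b 0 ≠ 0 := fun h => by rw [h] at hs; simp at hs
  have hip : (inner ℝ (sp a) (sp b) : ℝ) = a 0 * b 0 := by
    rw [minkG_eq] at hab; linarith
  have heq : (inner ℝ (sp a) (sp b) : ℝ) = ‖sp a‖ * ‖sp b‖ := by
    rw [hip, hna, hnb, ← abs_mul, abs_of_pos hs]
  have hprop := inner_eq_norm_mul_iff_real.mp heq
  rw [hna, hnb] at hprop
  -- |b 0| • sp a = |a 0| • sp b
  have hratio : b 0 / a 0 = |b 0| / |a 0| := by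
    rw [← abs_div, abs_of_pos]
    rcases mul_pos_iff.mp hs with ⟨h1, h2⟩ | ⟨h1, h2⟩
    · exact div_pos h2 h1
    · exact div_pos_of_neg_of_neg h2 h1
  funext i
  by_cases hi : (i : ℕ) = 0
  · have hi' : i = 0 := Fin.ext hi
    subst hi'
    simp only [Pi.smul_apply, smul_eq_mul]
    field_simp
  · have h1 := congrFun (congrArg WithLp.ofLp hprop) i
    simp only [Pi.smul_apply, PiLp.smul_apply, smul_eq_mul] at h1 ⊢
    have hsa : sp a i = a i := by simp [sp, Fin.val_eq_zero_iff.not.mp hi]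
    have hsb : sp b i = b i := by simp [sp, Fin.val_eq_zero_iff.not.mp hi]
    rw [hsa, hsb] at h1
    rw [hratio]
    have habs0 : |a 0| ≠ 0 := abs_ne_zero.mpr ha0
    field_simp
    linarith [h1]

lemma prop_of_null_orth {a b : Fin (n+1) → ℝ} (ha : minkG a a = 0) (ha0 : a ≠ 0)
    (hb : minkG b b = 0) (hab : minkG a b = 0) : b = (b 0 / a 0) • a := by
  by_cases hbz : b = 0
  · subst hbz; simp
  have ha0' := null_coord_ne ha ha0
  have hb0' := null_coord_ne hb hbz
  rcases lt_trichotomy (a 0 * b 0) 0 with hs | hs | hs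
  · have hbn : minkG (-b) (-b) = 0 := by rw [minkG_neg_left, minkG_neg_right]; linarith
    have habn : minkG a (-b) = 0 := by rw [minkG_neg_right]; linarith
    have hsn : 0 < a 0 * (-b) 0 := by
      have : (-b) 0 = -(b 0) := rfl
      rw [this]; nlinarith
    have := prop_aux ha hbn habn hsn
    have h2 : -b = (-(b 0) / a 0) • a := by
      convert this using 2 <;> rfl
    calc b = -(-b) := (neg_neg b).symm
      _ = -((-(b 0) / a 0) • a) := by rw [h2]
      _ = (b 0 / a 0) • a := by rw [← neg_smul, neg_div, neg_neg]
  · exact absurd hs (by positivity)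
  · exact prop_aux ha hb hab hs

/-- the unit future timelike basis vector e₀ -/
noncomputable def e0 {n : ℕ} : Fin (n+1) → ℝ := fun i => if (i:ℕ) = 0 then 1 else 0

lemma sp_e0 : sp (e0 (n := n)) = 0 := by
  ext i; by_cases hi : (i:ℕ) = 0 <;> simp [sp, e0, hi]

lemma e0_zero : (e0 (n := n)) 0 = 1 := by simp [e0]

lemma minkG_e0_left (v : Fin (n+1) → ℝ) : minkG e0 v = v 0 := by
  rw [minkG_eq, sp_e0, e0_zero]; simp

lemma ft_smul_e0 {c : ℝ} (hc : 0 < c) : FutureTimelike (c • (e0 (n := n))) := by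
  constructor
  · rw [minkG_smul_left, minkG_smul_right, minkG_e0_left, e0_zero]
    nlinarith
  · have : (c • (e0 (n := n))) 0 = c * 1 := by rw [Pi.smul_apply, e0_zero]; rfl
    rw [this]; linarith

section Maps

variable {n : ℕ} {F : (Fin (n+1) → ℝ) ≃ (Fin (n+1) → ℝ)}

/-- abbreviation for the hypothesis -/
def Pres (F : (Fin (n+1) → ℝ) ≃ (Fin (n+1) → ℝ)) : Prop :=
  ∀ p q, FutureTimelike (p - q) → FutureTimelike (F p - F q)

lemma pres_symm_symm (hF : Pres F) : Pres (F.symm.symm) := by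
  simpa using hF

lemma ft_iff (hF : Pres F) (hFinv : Pres F.symm) (p q : Fin (n+1) → ℝ) :
    FutureTimelike (p - q) ↔ FutureTimelike (F p - F q) := by
  constructor
  · exact hF p q
  · intro h
    have := hFinv (F p) (F q) h
    simpa using this

lemma causal_iff_forall (x y : Fin (n+1) → ℝ) :
    Causal (y - x) ↔ ∀ z, FutureTimelike (z - y) → FutureTimelike (z - x) := by
  constructor
  · intro h z hz
    have : z - x = (z - y) + (y - x) := by abel
    rw [this]
    exact ft_add_causal hz h
  · intro h
    by_contra hc
    set w := y - x with hw
    unfold Causal at hc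
    push_neg at hc
    by_cases hw0 : w 0 < 0
    · -- use z = y + (-w 0 / 2) • e0
      set ε := -(w 0) / 2 with hε
      have hεpos : 0 < ε := by rw [hε]; linarith
      have h1 : FutureTimelike ((y + ε • e0) - y) := by
        have : (y + ε • e0) - y = ε • e0 := by abel
        rw [this]; exact ft_smul_e0 hεpos
      have h2 := h _ h1
      have h3 : (y + ε • e0) - x = ε • e0 + w := by rw [hw]; abel
      rw [h3] at h2
      have h4 : ((ε • e0 + w : Fin (n+1) → ℝ)) 0 = ε * 1 + w 0 := by
        simp [Pi.add_apply, Pi.smul_apply, e0_zero, smul_eq_mul]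
      have := h2.2
      rw [h4] at this
      rw [hε] at this
      linarith
    · push_neg at hw0
      have hq : minkG w w < 0 := by
        rcases lt_or_ge (minkG w w) 0 with h' | h'
        · exact h'
        · exact absurd hw0 (not_le.mpr (hc h'))
      set ε := min 1 (-(minkG w w) / (2 * (1 + 2 * w 0))) with hε
      have hden : 0 < 2 * (1 + 2 * w 0) := by linarith
      have hεpos : 0 < ε := by
        apply lt_min one_pos
        apply div_pos (by linarith) hden
      have h1 : FutureTimelike ((y + ε • e0) - y) := by
        have : (y + ε • e0) - y = ε • e0 := by abel
        rw [this]; exact ft_smul_e0 hεpos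
      have h2 := h _ h1
      have h3 : (y + ε • e0) - x = ε • e0 + w := by rw [hw]; abel
      rw [h3] at h2
      have hQ : minkG (ε • e0 + w) (ε • e0 + w)
          = ε * ε + 2 * (ε * w 0) + minkG w w := by
        rw [minkG_add_left, minkG_add_right, minkG_add_right,
          minkG_smul_left, minkG_smul_left, minkG_smul_right, minkG_smul_right,
          minkG_e0_left, e0_zero, minkG_comm w (e0), minkG_e0_left]
        ring
      have hle1 : ε ≤ 1 := min_le_left _ _
      have hle2 : ε ≤ -(minkG w w) / (2 * (1 + 2 * w 0)) := min_le_right _ _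
      have hle2' : ε * (2 * (1 + 2 * w 0)) ≤ -(minkG w w) :=
        (le_div_iff₀ hden).mp hle2
      have hcontra := h2.1
      rw [hQ] at hcontra
      nlinarith

lemma causal_map (hF : Pres F) (hFinv : Pres F.symm) {x y : Fin (n+1) → ℝ}
    (h : Causal (y - x)) : Causal (F y - F x) := by
  rw [causal_iff_forall] at h ⊢
  intro z' hz'
  have h1 : FutureTimelike (F.symm z' - y) := by
    have := hFinv z' (F y) hz'
    simpa using this
  have h2 := h _ h1
  have h3 := hF _ _ h2
  simpa using h3

lemma nullf_charac (w : Fin (n+1) → ℝ) :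
    NullF w ↔ Causal w ∧ ¬ FutureTimelike w ∧ w ≠ 0 := by
  constructor
  · rintro ⟨hq, h0⟩
    refine ⟨⟨le_of_eq hq.symm, le_of_lt h0⟩, ?_, ?_⟩
    · rintro ⟨hq', _⟩; rw [hq] at hq'; exact lt_irrefl _ hq'
    · intro h; rw [h] at h0; simp at h0
  · rintro ⟨⟨hq, h0⟩, hnft, hne⟩
    have h0' : 0 < w 0 := by
      rcases lt_or_eq_of_le h0 with h | h
      · exact h
      · exfalso
        apply hne
        apply eq_zero_of w h.symm
        apply sp_eq_zero_of_norm
        rw [minkG_self, ← h] at hq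
        nlinarith [norm_nonneg (sp w)]
    refine ⟨?_, h0'⟩
    by_contra hq'
    exact hnft ⟨lt_of_le_of_ne hq (Ne.symm hq'), h0'⟩

lemma nullf_map (hF : Pres F) (hFinv : Pres F.symm) {x y : Fin (n+1) → ℝ}
    (h : NullF (y - x)) : NullF (F y - F x) := by
  rw [nullf_charac] at h ⊢
  obtain ⟨h1, h2, h3⟩ := h
  refine ⟨causal_map hF hFinv h1, ?_, ?_⟩
  · intro hft
    exact h2 ((ft_iff hF hFinv y x).mpr hft)
  · intro hc
    apply h3
    have : F y = F x := by
      have := sub_eq_zero.mp hc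
      exact this
    have := F.injective this
    rw [this]; simp

/-- `y - x` is null (and nonzero), in either time direction. -/
def NullRel (x y : Fin (n+1) → ℝ) : Prop :=
  minkG (y - x) (y - x) = 0 ∧ y ≠ x

lemma nullrel_iff (x y : Fin (n+1) → ℝ) :
    NullRel x y ↔ NullF (y - x) ∨ NullF (x - y) := by
  constructor
  · rintro ⟨hq, hne⟩
    have hne' : y - x ≠ 0 := sub_ne_zero.mpr hne
    have h0 := null_coord_ne hq hne'
    rcases lt_trichotomy ((y - x) 0) 0 with h | h | h
    · right
      constructor
      · have : x - y = -(y - x) := by abel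
        rw [this, minkG_neg_left, minkG_neg_right, hq]; ring
      · have : (x - y) 0 = -((y - x) 0) := by
          simp [Pi.sub_apply]
        rw [this]; linarith
    · exact absurd h h0
    · left; exact ⟨hq, h⟩
  · rintro (⟨hq, h0⟩ | ⟨hq, h0⟩)
    · refine ⟨hq, ?_⟩
      intro h; rw [h] at h0; simp at h0
    · constructor
      · have : y - x = -(x - y) := by abel
        rw [this, minkG_neg_left, minkG_neg_right, hq]; ring
      · intro h; rw [h] at h0; simp at h0

lemma nullrel_map (hF : Pres F) (hFinv : Pres F.symm) {x y : Fin (n+1) → ℝ}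
    (h : NullRel x y) : NullRel (F x) (F y) := by
  rw [nullrel_iff] at h ⊢
  rcases h with h | h
  · left; exact nullf_map hF hFinv h
  · right; exact nullf_map hF hFinv h

lemma nullrel_iff_map (hF : Pres F) (hFinv : Pres F.symm) (x y : Fin (n+1) → ℝ) :
    NullRel x y ↔ NullRel (F x) (F y) := by
  constructor
  · exact nullrel_map hF hFinv
  · intro h
    have := nullrel_map hFinv (pres_symm_symm hF) h
    simpa using this

lemma ft_iff' (hF : Pres F) (hFinv : Pres F.symm) (p q : Fin (n+1) → ℝ) :
    FutureTimelike (p - q) ↔ FutureTimelike (F p - F q) := ft_iff hF hFinv p q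

end Maps

section Perp

variable {n : ℕ}

/-- `u` lies on the null line through `x` and `y` -/
def OnLine (x y u : Fin (n+1) → ℝ) : Prop :=
  u = x ∨ u = y ∨ (NullRel x u ∧ NullRel y u)

/-- `z` is not chronologically related to any point of the null line through `x`, `y` -/
def PerpP (x y z : Fin (n+1) → ℝ) : Prop :=
  ∀ u, OnLine x y u → ¬ FutureTimelike (z - u) ∧ ¬ FutureTimelike (u - z)

lemma line_param {x u a : Fin (n+1) → ℝ} (ha : minkG a a = 0) (ha0 : a ≠ 0)
    (h : OnLine x (x + a) u) : ∃ t : ℝ, u = x + t • a := by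
  rcases h with h | h | ⟨⟨h1q, h1ne⟩, ⟨h2q, h2ne⟩⟩
  · exact ⟨0, by rw [h]; simp⟩
  · exact ⟨1, by rw [h]; simp⟩
  · -- u ≠ x, u ≠ x + a, u - x and u - (x+a) null
    set y := x + a with hy
    have hux : u - x ≠ 0 := sub_ne_zero.mpr h1ne
    have hyu : y - u ≠ 0 := sub_ne_zero.mpr (Ne.symm h2ne)
    have hyuq : minkG (y - u) (y - u) = 0 := by
      have : y - u = -(u - y) := by abel
      rw [this, minkG_neg_left, minkG_neg_right, h2q]; ring
    have hsum : (u - x) + (y - u) = a := by rw [hy]; abel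
    have horth : minkG (u - x) (y - u) = 0 := by
      have h0 : minkG ((u - x) + (y - u)) ((u - x) + (y - u)) = 0 := by
        rw [hsum]; exact ha
      rw [minkG_add_left, minkG_add_right, minkG_add_right, h1q, hyuq,
        minkG_comm (y - u) (u - x)] at h0
      linarith
    have hprop := prop_of_null_orth h1q hux hyuq horth
    set r := (y - u) 0 / (u - x) 0 with hr
    have hsum2 : a = (1 + r) • (u - x) := by
      rw [← hsum, hprop]
      rw [add_smul, one_smul]
    have h1r : (1 : ℝ) + r ≠ 0 := by
      intro hc
      rw [hc, zero_smul] at hsum2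
      exact ha0 hsum2
    refine ⟨(1 + r)⁻¹, ?_⟩
    have : u - x = (1 + r)⁻¹ • a := by
      rw [hsum2, smul_smul, inv_mul_cancel₀ h1r, one_smul]
    rw [← this]; abel

lemma perp_of_orth {x z a : Fin (n+1) → ℝ} (ha : minkG a a = 0) (ha0 : a ≠ 0)
    (h : minkG (z - x) a = 0) : PerpP x (x + a) z := by
  intro u hu
  obtain ⟨t, ht⟩ := line_param ha ha0 hu
  have hzu : z - u = (z - x) + (-t) • a := by rw [ht]; simp [neg_smul]; abel
  have hq : minkG (z - u) (z - u) = minkG (z - x) (z - x) := by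
    rw [hzu, minkG_expand, h, ha]; ring
  have hle : minkG (z - x) (z - x) ≤ 0 := orth_null_nonpos ha ha0 h
  constructor
  · rintro ⟨hft, -⟩; rw [hq] at hft; linarith
  · rintro ⟨hft, -⟩
    have : minkG (u - z) (u - z) = minkG (z - u) (z - u) := by
      have h2 : u - z = -(z - u) := by abel
      rw [h2, minkG_neg_left, minkG_neg_right]; ring
    rw [this, hq] at hft; linarith

lemma orth_of_perp {x z a : Fin (n+1) → ℝ} (ha : minkG a a = 0) (ha0 : a ≠ 0)
    (h : PerpP x (x + a) z) : minkG (z - x) a = 0 := by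
  by_contra hc
  set c := minkG (z - x) a with hcdef
  set t := (minkG (z - x) (z - x) - 1) / (2 * c) with htdef
  set u := x + t • a with hudef
  have honline : OnLine x (x + a) u := by
    by_cases ht0 : t = 0
    · left; rw [hudef, ht0]; simp
    by_cases ht1 : t = 1
    · right; left; rw [hudef, ht1]; simp
    · right; right
      constructor
      · constructor
        · have : u - x = t • a := by rw [hudef]; abel
          rw [this, minkG_smul_left, minkG_smul_right, ha]; ring
        · intro hux
          rw [hudef] at hux
          have : t • a = 0 := by
            have := congrArg (fun v => v - x) hux
            simpa using this
          rcases smul_eq_zero.mp this with h' | h'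
          · exact ht0 h'
          · exact ha0 h'
      · constructor
        · have : u - (x + a) = (t - 1) • a := by rw [hudef, sub_smul, one_smul]; abel
          rw [this, minkG_smul_left, minkG_smul_right, ha]; ring
        · intro huy
          rw [hudef] at huy
          have : (t - 1) • a = 0 := by
            rw [sub_smul, one_smul]
            have := congrArg (fun v => v - x - a) huy
            simpa using this
          rcases smul_eq_zero.mp this with h' | h'
          · exact ht1 (by linarith [sub_eq_zero.mp h'])
          · exact ha0 h'
  have hzu : z - u = (z - x) + (-t) • a := by rw [hudef]; simp [neg_smul]; abel
  have hq : minkG (z - u) (z - u) = 1 := by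
    rw [hzu, minkG_expand, ha, ← hcdef, htdef]
    field_simp
    ring
  have h0ne : (z - u) 0 ≠ 0 := timelike_coord_ne (by rw [hq]; norm_num)
  obtain ⟨hnf1, hnf2⟩ := h u honline
  rcases lt_or_gt_of_ne h0ne with h' | h'
  · apply hnf2
    constructor
    · have : minkG (u - z) (u - z) = minkG (z - u) (z - u) := by
        have h2 : u - z = -(z - u) := by abel
        rw [h2, minkG_neg_left, minkG_neg_right]; ring
      rw [this, hq]; norm_num
    · have : (u - z) 0 = -((z - u) 0) := by simp [Pi.sub_apply]
      rw [this]; linarith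
  · exact hnf1 ⟨by rw [hq]; norm_num, h'⟩

end Perp

section Maps2

variable {n : ℕ} {F : (Fin (n+1) → ℝ) ≃ (Fin (n+1) → ℝ)}

lemma nullf_ne_zero {a : Fin (n+1) → ℝ} (ha : NullF a) : a ≠ 0 := by
  intro h
  have := ha.2
  rw [h] at this
  simp at this

/-- Hyperplane image lemma: `F` maps the degenerate hyperplane through `x`
orthogonal to the null direction `a` into the corresponding one at `F x`. -/
lemma hil (hF : Pres F) (hFinv : Pres F.symm) {a : Fin (n+1) → ℝ} (ha : NullF a)
    (x z : Fin (n+1) → ℝ) (h : minkG (z - x) a = 0) :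
    minkG (F z - F x) (F (x + a) - F x) = 0 := by
  have ha0 : a ≠ 0 := nullf_ne_zero ha
  have himg : NullF (F (x + a) - F x) := by
    apply nullf_map hF hFinv
    rw [add_sub_cancel_left]
    exact ha
  set a' := F (x + a) - F x with ha'def
  have ha'q : minkG a' a' = 0 := himg.1
  have ha'0 : a' ≠ 0 := nullf_ne_zero himg
  have hperp : PerpP x (x + a) z := perp_of_orth ha.1 ha0 h
  have hxy' : F x + a' = F (x + a) := by rw [ha'def]; abel
  have hperp' : PerpP (F x) (F x + a') (F z) := by
    rw [hxy']
    intro u' hu'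
    have hu : OnLine x (x + a) (F.symm u') := by
      rcases hu' with h' | h' | ⟨h1, h2⟩
      · left; rw [h']; simp
      · right; left; rw [h']; simp
      · right; right
        constructor
        · rw [nullrel_iff_map hF hFinv]
          simpa using h1
        · rw [nullrel_iff_map hF hFinv]
          simpa using h2
    obtain ⟨hn1, hn2⟩ := hperp _ hu
    constructor
    · intro hftc
      apply hn1
      rw [ft_iff hF hFinv]
      simpa using hftc
    · intro hftc
      apply hn2
      rw [ft_iff hF hFinv]
      simpa using hftc
  exact orth_of_perp ha'q ha'0 hperp'

/-- Direction consistency: the image null directions at different base points agree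
up to a positive factor. -/
lemma dc (hF : Pres F) (hFinv : Pres F.symm) {a : Fin (n+1) → ℝ} (ha : NullF a)
    (x₁ x₂ : Fin (n+1) → ℝ) :
    ∃ t : ℝ, 0 < t ∧ F (x₂ + a) - F x₂ = t • (F (x₁ + a) - F x₁) := by
  have himg1 : NullF (F (x₁ + a) - F x₁) := by
    apply nullf_map hF hFinv; rw [add_sub_cancel_left]; exact ha
  have himg2 : NullF (F (x₂ + a) - F x₂) := by
    apply nullf_map hF hFinv; rw [add_sub_cancel_left]; exact ha
  set a1 := F (x₁ + a) - F x₁ with ha1def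
  set a2 := F (x₂ + a) - F x₂ with ha2def
  have conclude : minkG a1 a2 = 0 → ∃ t : ℝ, 0 < t ∧ a2 = t • a1 := by
    intro horth
    have hprop := prop_of_null_orth himg1.1 (nullf_ne_zero himg1) himg2.1 horth
    refine ⟨a2 0 / a1 0, div_pos himg2.2 himg1.2, hprop⟩
  by_cases hc : minkG (x₂ - x₁) a = 0
  · -- same hyperplane
    have h1 : minkG (F x₂ - F x₁) a1 = 0 := hil hF hFinv ha x₁ x₂ hc
    have h2 : minkG (F (x₂ + a) - F x₁) a1 = 0 := by
      apply hil hF hFinv ha x₁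
      have hrw : x₂ + a - x₁ = (x₂ - x₁) + a := by abel
      rw [hrw, minkG_add_left, hc, ha.1]
      ring
    apply conclude
    have hrw : a2 = (F (x₂ + a) - F x₁) - (F x₂ - F x₁) := by rw [ha2def]; abel
    rw [minkG_comm, hrw, minkG_sub_left, h1, h2]
    ring
  · -- disjoint hyperplanes: show orthogonality by contradiction
    apply conclude
    by_contra hγ
    set γ := minkG a1 a2 with hγdef
    set d1 := minkG (F x₁) a1 with hd1
    set d2 := minkG (F x₂) a2 with hd2
    set w := (d2 / γ) • a1 + (d1 / γ) • a2 with hwdef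
    have hw1 : minkG (w - F x₁) a1 = 0 := by
      rw [minkG_sub_left, hwdef, minkG_add_left, minkG_smul_left, minkG_smul_left,
        himg1.1, minkG_comm a2 a1, ← hγdef, ← hd1]
      field_simp <;> ring
    have hw2 : minkG (w - F x₂) a2 = 0 := by
      rw [minkG_sub_left, hwdef, minkG_add_left, minkG_smul_left, minkG_smul_left,
        himg2.1, ← hγdef, ← hd2]
      field_simp <;> ring
    -- pull back with F.symm
    have hkey1 : minkG (F.symm w - x₁) a = 0 := by
      have := hil (F := F.symm) hFinv (pres_symm_symm hF) himg1 (F x₁) w hw1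
      have hrw1 : F.symm (F x₁) = x₁ := F.symm_apply_apply x₁
      have hrw2 : F.symm (F x₁ + a1) = x₁ + a := by
        rw [ha1def]
        have : F x₁ + (F (x₁ + a) - F x₁) = F (x₁ + a) := by abel
        rw [this, F.symm_apply_apply]
      rw [hrw1, hrw2] at this
      have hrw3 : x₁ + a - x₁ = a := add_sub_cancel_left x₁ a
      rw [hrw3] at this
      exact this
    have hkey2 : minkG (F.symm w - x₂) a = 0 := by
      have := hil (F := F.symm) hFinv (pres_symm_symm hF) himg2 (F x₂) w hw2
      have hrw1 : F.symm (F x₂) = x₂ := F.symm_apply_apply x₂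
      have hrw2 : F.symm (F x₂ + a2) = x₂ + a := by
        rw [ha2def]
        have : F x₂ + (F (x₂ + a) - F x₂) = F (x₂ + a) := by abel
        rw [this, F.symm_apply_apply]
      rw [hrw1, hrw2] at this
      have hrw3 : x₂ + a - x₂ = a := add_sub_cancel_left x₂ a
      rw [hrw3] at this
      exact this
    apply hc
    have hrw : x₂ - x₁ = (F.symm w - x₁) - (F.symm w - x₂) := by abel
    rw [hrw, minkG_sub_left, hkey1, hkey2]
    ring

/-- existence of the level function `φ` for a null direction -/
lemma exists_phi (hF : Pres F) (hFinv : Pres F.symm) {a : Fin (n+1) → ℝ} (ha : NullF a) :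
    ∃ φ : ℝ → ℝ, StrictMono φ ∧ ∀ z, minkG (F z) (F a - F 0) = φ (minkG z a) := by
  have ha0pos : 0 < a 0 := ha.2
  have ha0 : a 0 ≠ 0 := ne_of_gt ha0pos
  set a' := F a - F 0 with ha'def
  have himg : NullF a' := by
    have := nullf_map hF hFinv (x := 0) (y := a) (by rw [sub_zero]; exact ha)
    rw [ha'def]
    convert this using 2
  set xc : ℝ → (Fin (n+1) → ℝ) := fun c => (c / a 0) • e0 with hxc
  have hxcval : ∀ c, minkG (xc c) a = c := by
    intro c
    rw [hxc]
    simp only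
    rw [minkG_smul_left, minkG_e0_left]
    field_simp
  set φ : ℝ → ℝ := fun c => minkG (F (xc c)) a' with hφ
  have hmain : ∀ z, minkG (F z) a' = φ (minkG z a) := by
    intro z
    set c := minkG z a with hcdef
    have hz : minkG (z - xc c) a = 0 := by
      rw [minkG_sub_left, hxcval, hcdef]; ring
    have hk := hil hF hFinv ha (xc c) z hz
    obtain ⟨t, ht, he⟩ := dc hF hFinv ha 0 (xc c)
    rw [he] at hk
    have hz0 : F (0 + a) - F 0 = a' := by rw [zero_add, ha'def]
    rw [hz0, minkG_smul_right] at hk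
    have : minkG (F z - F (xc c)) a' = 0 := by
      rcases mul_eq_zero.mp hk with h' | h'
      · exact absurd h' (ne_of_gt ht)
      · exact h'
    rw [minkG_sub_left] at this
    rw [hφ]
    simp only
    linarith
  have hcausal : Causal a' := ⟨le_of_eq himg.1.symm, le_of_lt himg.2⟩
  have ha'ne : a' ≠ 0 := nullf_ne_zero himg
  refine ⟨φ, ?_, hmain⟩
  intro c c' hcc
  have hft : FutureTimelike (xc c' - xc c) := by
    have : xc c' - xc c = ((c' - c) / a 0) • e0 := by
      rw [hxc]
      simp only
      rw [← sub_smul]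
      congr 1
      field_simp
    rw [this]
    exact ft_smul_e0 (div_pos (by linarith) ha0pos)
  have hft' := hF _ _ hft
  have hpos := minkG_pos_of hft' hcausal ha'ne
  rw [minkG_sub_left] at hpos
  rw [hφ]
  simp only
  linarith

end Maps2

section Aux

lemma additive_mono_linear {φ : ℝ → ℝ} (hadd : ∀ a b : ℝ, φ (a + b) = φ a + φ b)
    (hmono : Monotone φ) : ∀ t : ℝ, φ t = φ 1 * t := by
  have h0 : φ 0 = 0 := by
    have := hadd 0 0
    simp at this
    linarith
  set H : ℝ →+ ℝ := AddMonoidHom.mk' φ hadd with hH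
  have hq : ∀ q : ℚ, φ (q : ℝ) = (q : ℝ) * φ 1 := by
    intro q
    have := map_rat_smul H q (1 : ℝ)
    simp only [Rat.smul_def, mul_one] at this
    rw [hH] at this
    simpa [mul_comm] using this
  have h1nonneg : 0 ≤ φ 1 := by
    have := hmono (le_of_lt one_pos)
    rw [h0] at this
    exact this
  intro t
  apply le_antisymm
  · by_contra hcon
    push_neg at hcon
    -- φ 1 * t < φ t ; find rational q > t with φ 1 * q < φ t
    rcases eq_or_lt_of_le h1nonneg with h1 | h1
    · obtain ⟨q, hq1⟩ := exists_rat_gt t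
      have := hmono (le_of_lt hq1)
      rw [hq q, ← h1] at this
      simp at this
      rw [← h1] at hcon
      simp at hcon
      linarith
    · obtain ⟨q, hq1, hq2⟩ := exists_rat_btwn
        (show t < t + (φ t - φ 1 * t) / φ 1 by
          have : 0 < (φ t - φ 1 * t) / φ 1 := div_pos (by linarith) h1
          linarith)
      have hm := hmono (le_of_lt hq1)
      rw [hq q] at hm
      have : (q : ℝ) < t + (φ t - φ 1 * t) / φ 1 := hq2
      have h2 : (q : ℝ) * φ 1 < (t + (φ t - φ 1 * t) / φ 1) * φ 1 :=
        mul_lt_mul_of_pos_right this h1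
      rw [add_mul, div_mul_cancel₀ _ (ne_of_gt h1)] at h2
      nlinarith
  · by_contra hcon
    push_neg at hcon
    rcases eq_or_lt_of_le h1nonneg with h1 | h1
    · obtain ⟨q, hq1⟩ := exists_rat_lt t
      have := hmono (le_of_lt hq1)
      rw [hq q, ← h1] at this
      simp at this
      rw [← h1] at hcon
      simp at hcon
      linarith
    · obtain ⟨q, hq1, hq2⟩ := exists_rat_btwn
        (show t - (φ 1 * t - φ t) / φ 1 < t by
          have : 0 < (φ 1 * t - φ t) / φ 1 := div_pos (by linarith) h1
          linarith)
      have hm := hmono (le_of_lt hq2)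
      rw [hq q] at hm
      have h2 : (t - (φ 1 * t - φ t) / φ 1) * φ 1 < (q : ℝ) * φ 1 :=
        mul_lt_mul_of_pos_right hq1 h1
      rw [sub_mul, div_mul_cancel₀ _ (ne_of_gt h1)] at h2
      nlinarith

variable {n : ℕ}

/-- `minkG v ·` as a linear functional -/
noncomputable def glin (v : Fin (n+1) → ℝ) : (Fin (n+1) → ℝ) →ₗ[ℝ] ℝ where
  toFun w := minkG v w
  map_add' u w := minkG_add_right v u w
  map_smul' c w := minkG_smul_right c v w

@[simp] lemma glin_apply (v w : Fin (n+1) → ℝ) : glin v w = minkG v w := rfl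

lemma minkG_zero_right (v : Fin (n+1) → ℝ) : minkG v 0 = 0 := by
  have := minkG_smul_right 0 v 0
  simpa using this

lemma minkG_zero_left (v : Fin (n+1) → ℝ) : minkG 0 v = 0 := by
  rw [minkG_comm]; exact minkG_zero_right v

lemma minkG_sum_right {ι : Type*} (s : Finset ι) (v : Fin (n+1) → ℝ)
    (c : ι → ℝ) (w : ι → (Fin (n+1) → ℝ)) :
    minkG v (∑ i ∈ s, c i • w i) = ∑ i ∈ s, c i * minkG v (w i) := by
  have := map_sum (glin v) (fun i => c i • w i) s
  simp only [glin_apply] at this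
  rw [this]
  refine Finset.sum_congr rfl fun i _ => ?_
  rw [minkG_smul_right]

/-- `minkG · w` as a linear functional -/
noncomputable def gdual (w : Fin (n+1) → ℝ) : (Fin (n+1) → ℝ) →ₗ[ℝ] ℝ where
  toFun v := minkG v w
  map_add' u v := minkG_add_left u v w
  map_smul' c v := minkG_smul_left c v w

@[simp] lemma gdual_apply (w v : Fin (n+1) → ℝ) : gdual w v = minkG v w := rfl

lemma minkG_sum_left {ι : Type*} (s : Finset ι) (v : Fin (n+1) → ℝ)
    (c : ι → ℝ) (w : ι → (Fin (n+1) → ℝ)) :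
    minkG (∑ i ∈ s, c i • w i) v = ∑ i ∈ s, c i * minkG (w i) v := by
  rw [minkG_comm, minkG_sum_right]
  exact Finset.sum_congr rfl fun i _ => by rw [minkG_comm]

lemma minkG_single_right (z : Fin (n+1) → ℝ) (j : Fin (n+1)) (c : ℝ) :
    minkG z (Pi.single j c) = if (j : ℕ) = 0 then z j * c else -(z j * c) := by
  unfold minkG
  rw [Finset.sum_eq_single j]
  · rw [Pi.single_eq_same]
  · intro k _ hk
    rw [Pi.single_eq_of_ne hk]
    split <;> ring
  · intro h
    exact absurd (Finset.mem_univ j) h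

lemma minkG_single_left (z : Fin (n+1) → ℝ) (j : Fin (n+1)) (c : ℝ) :
    minkG (Pi.single j c) z = if (j : ℕ) = 0 then c * z j else -(c * z j) := by
  rw [minkG_comm, minkG_single_right]
  split <;> ring

end Aux

section Final

variable {m : ℕ}

def i1 : Fin (m+3) := ⟨1, by omega⟩
def i2 : Fin (m+3) := ⟨2, by omega⟩

lemma i1_val : ((i1 : Fin (m+3)) : ℕ) = 1 := rfl
lemma i2_val : ((i2 : Fin (m+3)) : ℕ) = 2 := rfl
lemma i1_ne_zero : (i1 : Fin (m+3)) ≠ 0 := by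
  intro h
  have := congrArg (Fin.val) h
  simp [i1_val] at this
lemma i2_ne_zero : (i2 : Fin (m+3)) ≠ 0 := by
  intro h
  have := congrArg (Fin.val) h
  simp [i2_val] at this

noncomputable def fb (i : Fin (m+3)) : Fin (m+3) → ℝ :=
  if (i : ℕ) = 0 then Pi.single 0 1 + Pi.single i1 1 else Pi.single 0 1 - Pi.single i 1

lemma ne_zero_of_val {i : Fin (m+3)} (h : (i:ℕ) ≠ 0) : i ≠ 0 := by
  intro h'; rw [h'] at h; simp at h

lemma gz_fb (z : Fin (m+3) → ℝ) (i : Fin (m+3)) :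
    minkG z (fb i) = if (i : ℕ) = 0 then z 0 - z i1 else z 0 + z i := by
  unfold fb
  split
  · rw [minkG_add_right, minkG_single_right, minkG_single_right]
    simp [i1_val]
    ring
  · next h =>
    rw [minkG_sub_right, minkG_single_right, minkG_single_right]
    simp [h]

lemma fb_apply_zero (i : Fin (m+3)) : fb i 0 = 1 := by
  unfold fb
  split
  · next h =>
    simp [Pi.single_eq_of_ne (Ne.symm i1_ne_zero), Pi.single_eq_same]
  · next h =>
    have hi : i ≠ 0 := ne_zero_of_val h
    simp [Pi.single_eq_of_ne (Ne.symm hi), Pi.single_eq_same]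

lemma fb_null (i : Fin (m+3)) : NullF (fb i) := by
  constructor
  · rw [show minkG (fb i) (fb i) = minkG (fb i) (fb i) from rfl, gz_fb]
    split
    · next h =>
      have h1 : fb i i1 = 1 := by
        unfold fb
        rw [if_pos h]
        simp [Pi.single_eq_of_ne i1_ne_zero, Pi.single_eq_same]
      rw [fb_apply_zero, h1]; ring
    · next h =>
      have h1 : fb i i = -1 := by
        unfold fb
        rw [if_neg h]
        have hi : i ≠ 0 := ne_zero_of_val h
        simp [Pi.single_eq_of_ne hi, Pi.single_eq_same]
      rw [fb_apply_zero, h1]; ring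
  · rw [fb_apply_zero]; norm_num

noncomputable def bv (j : Fin (m+3)) : Fin (m+3) → ℝ :=
  Pi.single 0 1 + Pi.single j 1

lemma bv_eq_comb {j : Fin (m+3)} (hj0 : (j:ℕ) ≠ 0) (hj1 : (j:ℕ) ≠ 1) :
    bv j = fb 0 + fb i1 - fb j := by
  unfold bv fb
  rw [if_pos (by simp), if_neg (by rw [i1_val]; norm_num), if_neg hj0]
  abel

lemma gz_bv (z : Fin (m+3) → ℝ) {j : Fin (m+3)} (hj0 : (j:ℕ) ≠ 0) :
    minkG z (bv j) = z 0 - z j := by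
  unfold bv
  rw [minkG_add_right, minkG_single_right, minkG_single_right]
  simp [hj0]
  ring

lemma bv_apply_zero {j : Fin (m+3)} (hj0 : (j:ℕ) ≠ 0) : bv j 0 = 1 := by
  unfold bv
  have hj : j ≠ 0 := ne_zero_of_val hj0
  simp [Pi.single_eq_of_ne (Ne.symm hj), Pi.single_eq_same]

lemma bv_null {j : Fin (m+3)} (hj0 : (j:ℕ) ≠ 0) : NullF (bv j) := by
  constructor
  · rw [gz_bv _ hj0]
    have h1 : bv j j = 1 := by
      unfold bv
      have hj : j ≠ 0 := ne_zero_of_val hj0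
      simp [Pi.single_eq_of_ne hj, Pi.single_eq_same]
    rw [bv_apply_zero hj0, h1]; ring
  · rw [bv_apply_zero hj0]; norm_num

lemma surj_levels (u : Fin (m+3) → ℝ) : ∃ z : Fin (m+3) → ℝ, ∀ i, minkG z (fb i) = u i := by
  refine ⟨fun k => if (k:ℕ) = 0 then (u 0 + u i1)/2
    else if k = i1 then (u i1 - u 0)/2 else u k - (u 0 + u i1)/2, fun i => ?_⟩
  rw [gz_fb]
  split
  · next h =>
    have hi : i = 0 := Fin.ext (by simpa using h)
    subst hi
    simp [i1_val]
    ring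
  · next h =>
    by_cases hii : i = i1
    · subst hii
      simp [i1_val]
      ring
    · simp [h, hii, i1_val]

end Final

section Final2

variable {m : ℕ} {F : (Fin (m+3) → ℝ) ≃ (Fin (m+3) → ℝ)}

lemma exists_affine (hF : Pres F) (hFinv : Pres F.symm) :
    ∃ L : (Fin (m+3) → ℝ) →ₗ[ℝ] (Fin (m+3) → ℝ), ∀ z, F z = L z + F 0 := by
  classical
  choose φ hmono hphi using fun i : Fin (m+3) => exists_phi hF hFinv (fb_null i)
  set f' : Fin (m+3) → (Fin (m+3) → ℝ) := fun i => F (fb i) - F 0 with hf'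
  -- key door: evaluate minkG (F z) against combinations of the f'
  have keysum : ∀ (c : Fin (m+3) → ℝ) (u : Fin (m+3) → ℝ) (z : Fin (m+3) → ℝ),
      (∀ i, minkG z (fb i) = u i) →
      minkG (F z) (∑ k, c k • f' k) = ∑ k, c k * φ k (u k) := by
    intro c u z hz
    rw [minkG_sum_right]
    refine Finset.sum_congr rfl fun k _ => ?_
    rw [hf']
    simp only
    rw [hphi k z, hz k]
  have hind : LinearIndependent ℝ f' := by
    rw [Fintype.linearIndependent_iff]
    intro d hd i
    have key : ∀ u : Fin (m+3) → ℝ, ∑ k, d k * φ k (u k) = 0 := by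
      intro u
      obtain ⟨z, hz⟩ := surj_levels u
      have h0 := keysum d u z hz
      rw [hd, minkG_zero_right] at h0
      exact h0.symm
    have h1 := key (Pi.single i 1)
    have h0' := key 0
    have hdiff : ∑ k, (d k * φ k ((Pi.single i 1 : Fin (m+3) → ℝ) k)
        - d k * φ k ((0 : Fin (m+3) → ℝ) k)) = 0 := by
      rw [Finset.sum_sub_distrib, h1, h0']
      ring
    rw [Finset.sum_eq_single i] at hdiff
    · rw [Pi.single_eq_same] at hdiff
      have hne : φ i 1 - φ i 0 ≠ 0 := by
        have := (hmono i) (zero_lt_one)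
        intro hc
        simp only [Pi.zero_apply] at hdiff
        linarith
      have : d i * (φ i 1 - φ i 0) = 0 := by
        simp only [Pi.zero_apply] at hdiff
        ring_nf at hdiff ⊢
        linarith
      rcases mul_eq_zero.mp this with h | h
      · exact h
      · exact absurd h hne
    · intro k _ hk
      rw [Pi.single_eq_of_ne hk]
      simp
    · simp
  have hspan : Submodule.span ℝ (Set.range f') = ⊤ := by
    apply hind.span_eq_top_of_card_eq_finrank
    rw [Module.finrank_fin_fun]
    simp
  have pex : ∀ j : Fin (m+3), (j:ℕ) ≠ 0 → (j:ℕ) ≠ 1 →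
      (∃ s, 0 < s ∧ ∀ c, φ 0 c = s * c + φ 0 0) ∧
      (∃ s, 0 < s ∧ ∀ c, φ i1 c = s * c + φ i1 0) ∧
      (∃ s, 0 < s ∧ ∀ c, φ j c = s * c + φ j 0) := by
    intro j hj0 hj1
    have hj0' : j ≠ 0 := ne_zero_of_val hj0
    have hji1 : i1 ≠ j := by
      intro h
      apply hj1
      rw [← h, i1_val]
    obtain ⟨β, hβmono, hβeq⟩ := exists_phi hF hFinv (bv_null hj0)
    have hmem : (F (bv j) - F 0) ∈ Submodule.span ℝ (Set.range f') := by
      rw [hspan]; trivial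
    obtain ⟨c, hc⟩ := (Submodule.mem_span_range_iff_exists_fun ℝ).mp hmem
    have key : ∀ u : Fin (m+3) → ℝ, β (u 0 + u i1 - u j) = ∑ k, c k * φ k (u k) := by
      intro u
      obtain ⟨z, hz⟩ := surj_levels u
      have e1 : minkG z (bv j) = u 0 + u i1 - u j := by
        rw [bv_eq_comb hj0 hj1, minkG_sub_right, minkG_add_right, hz 0, hz i1, hz j]
      calc β (u 0 + u i1 - u j) = β (minkG z (bv j)) := by rw [e1]
        _ = minkG (F z) (F (bv j) - F 0) := (hβeq z).symm
        _ = minkG (F z) (∑ k, c k • f' k) := by rw [hc]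
        _ = ∑ k, c k * φ k (u k) := keysum c u z hz
    set Φ : ℝ → ℝ := fun t => β t - β 0 with hΦdef
    have hval : ∀ α b' γ : ℝ, Φ (α + b' - γ)
        = c 0 * (φ 0 α - φ 0 0) + c i1 * (φ i1 b' - φ i1 0) + c j * (φ j γ - φ j 0) := by
      intro α b' γ
      set u : Fin (m+3) → ℝ :=
        fun k => if k = 0 then α else if k = i1 then b' else if k = j then γ else 0 with hu
      have hu0 : u 0 = α := by simp [hu]
      have hu1 : u i1 = b' := by simp [hu, i1_ne_zero]
      have huj : u j = γ := by simp [hu, hj0', Ne.symm hji1]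
      have h1 := key u
      rw [hu0, hu1, huj] at h1
      have h2 := key 0
      simp only [Pi.zero_apply] at h2
      norm_num at h2
      -- h2 : β 0 = ∑ k, c k * φ k 0
      have hsub : Φ (α + b' - γ) = ∑ k, (c k * φ k (u k) - c k * φ k 0) := by
        rw [hΦdef]
        simp only
        rw [Finset.sum_sub_distrib, h1, h2]
      rw [hsub]
      have hsubset : ({0, i1, j} : Finset (Fin (m+3))) ⊆ Finset.univ :=
        Finset.subset_univ _
      rw [← Finset.sum_subset hsubset]
      · have h0notin : (0 : Fin (m+3)) ∉ ({i1, j} : Finset (Fin (m+3))) := by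
          simp [Ne.symm i1_ne_zero, Ne.symm hj0', eq_comm]
        have h1notin : (i1 : Fin (m+3)) ∉ ({j} : Finset (Fin (m+3))) := by
          simp [hji1]
        rw [show ({0, i1, j} : Finset (Fin (m+3))) = insert 0 (insert i1 {j}) from rfl,
          Finset.sum_insert (by simpa using h0notin),
          Finset.sum_insert (by simpa using h1notin), Finset.sum_singleton,
          hu0, hu1, huj]
        ring
      · intro k _ hk
        simp only [Finset.mem_insert, Finset.mem_singleton] at hk
        push_neg at hk
        have huk : u k = 0 := by
          simp [hu, hk.1, hk.2.1, hk.2.2]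
        rw [huk]
        ring
    have hA : ∀ α : ℝ, Φ α = c 0 * (φ 0 α - φ 0 0) := by
      intro α
      have := hval α 0 0
      norm_num at this
      exact this
    have hB : ∀ b' : ℝ, Φ b' = c i1 * (φ i1 b' - φ i1 0) := by
      intro b'
      have := hval 0 b' 0
      norm_num at this
      exact this
    have hC : ∀ γ : ℝ, Φ (-γ) = c j * (φ j γ - φ j 0) := by
      intro γ
      have := hval 0 0 γ
      norm_num at this
      exact this
    have hadd : ∀ s t : ℝ, Φ (s + t) = Φ s + Φ t := by
      intro s t
      have h1 := hval s t 0
      norm_num at h1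
      rw [hA s, hB t]
      rw [h1]
    have hΦmono : Monotone Φ := by
      intro s t hst
      rw [hΦdef]
      simp only
      have := hβmono.monotone hst
      linarith
    have hlin := additive_mono_linear hadd hΦmono
    have hΦ1 : 0 < Φ 1 := by
      rw [hΦdef]
      simp only
      have := hβmono zero_lt_one
      linarith
    refine ⟨⟨Φ 1 / c 0, ?_, ?_⟩, ⟨Φ 1 / c i1, ?_, ?_⟩, ⟨-(Φ 1) / c j, ?_, ?_⟩⟩
    · -- 0 < Φ 1 / c 0
      have hc0 : c 0 ≠ 0 := by
        intro h
        have := hA 1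
        rw [h, hlin 1] at this
        norm_num at this
        linarith
      have := hA 1
      rw [hlin 1] at this
      norm_num at this
      rcases lt_or_gt_of_ne hc0 with h | h
      · nlinarith [(hmono 0) zero_lt_one]
      · exact div_pos hΦ1 h
    · intro t
      have h1 := hA t
      rw [hlin t] at h1
      have hc0 : c 0 ≠ 0 := by
        intro h
        have := hA 1
        rw [h, hlin 1] at this
        norm_num at this
        linarith
      field_simp
      linarith [h1]
    · have hc0 : c i1 ≠ 0 := by
        intro h
        have := hB 1
        rw [h, hlin 1] at this
        norm_num at this
        linarith
      have := hB 1
      rw [hlin 1] at this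
      norm_num at this
      rcases lt_or_gt_of_ne hc0 with h | h
      · nlinarith [(hmono i1) zero_lt_one]
      · exact div_pos hΦ1 h
    · intro t
      have h1 := hB t
      rw [hlin t] at h1
      have hc0 : c i1 ≠ 0 := by
        intro h
        have := hB 1
        rw [h, hlin 1] at this
        norm_num at this
        linarith
      field_simp
      linarith [h1]
    · have hc0 : c j ≠ 0 := by
        intro h
        have := hC 1
        rw [h, hlin (-1)] at this
        norm_num at this
        linarith
      have := hC 1
      rw [hlin (-1)] at this
      norm_num at this
      rcases lt_or_gt_of_ne hc0 with h | h
      · apply div_pos_of_neg_of_neg _ h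
        linarith
      · nlinarith [(hmono j) zero_lt_one]
    · intro t
      have h1 := hC t
      rw [hlin (-t)] at h1
      have hc0 : c j ≠ 0 := by
        intro h
        have := hC 1
        rw [h, hlin (-1)] at this
        norm_num at this
        linarith
      field_simp
      linarith [h1]
  have slopes : ∀ i : Fin (m+3), ∃ s : ℝ, 0 < s ∧ ∀ cc, φ i cc = s * cc + φ i 0 := by
    intro i
    by_cases h0 : (i:ℕ) = 0
    · have : i = 0 := Fin.ext (by simpa using h0)
      rw [this]
      exact (pex i2 (by rw [i2_val]; norm_num) (by rw [i2_val]; norm_num)).1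
    · by_cases h1 : (i:ℕ) = 1
      · have : i = i1 := Fin.ext (by rw [h1, i1_val])
        rw [this]
        exact (pex i2 (by rw [i2_val]; norm_num) (by rw [i2_val]; norm_num)).2.1
      · exact (pex i h0 h1).2.2
  choose s hspos hsaff using slopes
  -- T w = (minkG w (f' i))_i  is a linear bijection
  set T : (Fin (m+3) → ℝ) →ₗ[ℝ] (Fin (m+3) → ℝ) :=
    LinearMap.pi (fun i => gdual (f' i)) with hT
  have hTinj : Function.Injective T := by
    rw [← LinearMap.ker_eq_bot]
    rw [eq_bot_iff]
    intro w hw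
    simp only [LinearMap.mem_ker] at hw
    have hall : ∀ i, minkG w (f' i) = 0 := by
      intro i
      have := congrFun hw i
      simpa [hT, LinearMap.pi_apply] using this
    have hv : ∀ v, minkG w v = 0 := by
      intro v
      have hvmem : v ∈ Submodule.span ℝ (Set.range f') := by rw [hspan]; trivial
      induction hvmem using Submodule.span_induction with
      | mem x hx =>
          obtain ⟨i, rfl⟩ := hx
          exact hall i
      | zero => exact minkG_zero_right w
      | add x y _ _ hx hy => rw [minkG_add_right, hx, hy]; ring
      | smul a x _ hx => rw [minkG_smul_right, hx]; ring
    have : w = 0 := by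
      funext k
      have := hv (Pi.single k 1)
      rw [minkG_single_right] at this
      split at this <;> simp at this <;> simpa using this
    simpa using this
  have hTsurj : Function.Surjective T :=
    LinearMap.injective_iff_surjective.mp hTinj
  set Te := LinearEquiv.ofBijective T ⟨hTinj, hTsurj⟩ with hTe
  set S : (Fin (m+3) → ℝ) →ₗ[ℝ] (Fin (m+3) → ℝ) :=
    LinearMap.pi (fun i => s i • gdual (fb i)) with hS
  set r : Fin (m+3) → ℝ := fun i => φ i 0 with hr
  have hTF : ∀ z, T (F z) = S z + r := by
    intro z
    funext i
    have h1 : T (F z) i = minkG (F z) (f' i) := by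
      simp [hT, LinearMap.pi_apply]
    have h2 : (S z + r) i = s i * minkG z (fb i) + φ i 0 := by
      simp [hS, hr, LinearMap.pi_apply]
    rw [h1, h2, hf']
    simp only
    rw [hphi i z, hsaff i]
  refine ⟨(Te.symm : (Fin (m+3) → ℝ) →ₗ[ℝ] (Fin (m+3) → ℝ)) ∘ₗ S, ?_⟩
  have hFz : ∀ z, F z = Te.symm (S z) + Te.symm r := by
    intro z
    have h1 : Te (F z) = S z + r := by
      have h2 : Te (F z) = T (F z) := rfl
      rw [h2, hTF z]
    have h3 := congrArg Te.symm h1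
    rw [LinearEquiv.symm_apply_apply] at h3
    rw [h3, map_add]
  intro z
  have h0 := hFz 0
  rw [show S 0 = 0 from map_zero S, show Te.symm (0 : Fin (m+3) → ℝ) = 0 from map_zero _,
    zero_add] at h0
  rw [hFz z, LinearMap.comp_apply, h0]
  rfl

theorem az_main (hF : Pres F) (hFinv : Pres F.symm) :
    ∃ (lam : ℝ) (mm : Fin (m + 3) → ℝ)
      (Λ : (Fin (m + 3) → ℝ) →ₗ[ℝ] (Fin (m + 3) → ℝ)),
      0 < lam ∧
      (∀ v w, minkG (Λ v) (Λ w) = minkG v w) ∧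
      (∀ v, FutureTimelike v → FutureTimelike (Λ v)) ∧
      ∀ p, F p = lam • Λ p + mm := by
  classical
  obtain ⟨L, hL⟩ := exists_affine hF hFinv
  have hLv : ∀ v, L v = F v - F 0 := by
    intro v
    rw [hL v]
    abel
  have hFT : ∀ v, FutureTimelike v → FutureTimelike (L v) := by
    intro v hv
    rw [hLv]
    apply hF v 0
    rw [sub_zero]
    exact hv
  have hnull : ∀ v : Fin (m+3) → ℝ, minkG v v = 0 → minkG (L v) (L v) = 0 := by
    intro v hv
    by_cases hv0 : v = 0
    · subst hv0
      rw [map_zero]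
      exact minkG_zero_right 0
    · have h0 := null_coord_ne hv hv0
      rcases lt_or_gt_of_ne h0 with hneg | hpos
      · have hnf : NullF (-v) := by
          constructor
          · rw [minkG_neg_left, minkG_neg_right, hv]; ring
          · have : (-v) 0 = -(v 0) := rfl
            rw [this]; linarith
        have := (nullf_map hF hFinv (x := (0 : Fin (m+3) → ℝ)) (y := -v)
          (by rw [sub_zero]; exact hnf)).1
        rw [← hLv] at this
        rw [map_neg] at this
        rw [minkG_neg_left, minkG_neg_right] at this
        linarith
      · have hnf : NullF v := ⟨hv, hpos⟩
        have := (nullf_map hF hFinv (x := (0 : Fin (m+3) → ℝ)) (y := v)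
          (by rw [sub_zero]; exact hnf)).1
        rw [← hLv] at this
        exact this
  set eb : Fin (m+3) → (Fin (m+3) → ℝ) := fun k => Pi.single k 1 with heb
  have hG : ∀ k l, minkG (eb k) (eb l)
      = if k = l then (if (k:ℕ) = 0 then 1 else -1) else 0 := by
    intro k l
    rw [heb]
    simp only
    rw [minkG_single_right]
    by_cases hkl : k = l
    · subst hkl
      rw [Pi.single_eq_same]
      simp
    · rw [Pi.single_eq_of_ne (Ne.symm hkl)]
      simp [hkl]
  set μ := minkG (L (eb 0)) (L (eb 0)) with hμ
  have hebFT : FutureTimelike (eb 0) := by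
    constructor
    · rw [hG]; simp
    · rw [heb]; simp
  have hμpos : 0 < μ := (hFT _ hebFT).1
  have hB0k : ∀ k, k ≠ 0 →
      minkG (L (eb 0)) (L (eb k)) = 0 ∧ minkG (L (eb k)) (L (eb k)) = -μ := by
    intro k hk
    have hkv : (k:ℕ) ≠ 0 := by
      intro h
      exact hk (Fin.ext (by simpa using h))
    have hsym : minkG (L (eb k)) (L (eb 0)) = minkG (L (eb 0)) (L (eb k)) := minkG_comm _ _
    have hp : minkG (L (eb 0) + L (eb k)) (L (eb 0) + L (eb k))
        = μ + 2 * minkG (L (eb 0)) (L (eb k)) + minkG (L (eb k)) (L (eb k)) := by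
      rw [minkG_add_left, minkG_add_right, minkG_add_right, hsym, ← hμ]
      ring
    have hm : minkG (L (eb 0) - L (eb k)) (L (eb 0) - L (eb k))
        = μ - 2 * minkG (L (eb 0)) (L (eb k)) + minkG (L (eb k)) (L (eb k)) := by
      rw [minkG_sub_left, minkG_sub_right, minkG_sub_right, hsym, ← hμ]
      ring
    have hqp : minkG (eb 0 + eb k) (eb 0 + eb k) = 0 := by
      rw [minkG_add_left, minkG_add_right, minkG_add_right, minkG_comm (eb k) (eb 0),
        hG, hG, hG]
      simp [hk, Ne.symm hk, hkv]
    have hqm : minkG (eb 0 - eb k) (eb 0 - eb k) = 0 := by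
      rw [minkG_sub_left, minkG_sub_right, minkG_sub_right, minkG_comm (eb k) (eb 0),
        hG, hG, hG]
      simp [hk, Ne.symm hk, hkv]
    have h1 := hnull _ hqp
    have h2 := hnull _ hqm
    rw [map_add] at h1
    rw [map_sub] at h2
    rw [hp] at h1
    rw [hm] at h2
    constructor
    · linarith
    · linarith
  have hBkl : ∀ k l, k ≠ 0 → l ≠ 0 → k ≠ l →
      minkG (L (eb k)) (L (eb l)) = 0 := by
    intro k l hk hl hkl
    have hkv : (k:ℕ) ≠ 0 := by
      intro h; exact hk (Fin.ext (by simpa using h))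
    have hlv : (l:ℕ) ≠ 0 := by
      intro h; exact hl (Fin.ext (by simpa using h))
    set w2 : Fin (m+3) → ℝ := Real.sqrt 2 • eb 0 + (eb k + eb l) with hw2
    have hsq : Real.sqrt 2 * Real.sqrt 2 = 2 := Real.mul_self_sqrt (by norm_num)
    have hq2 : minkG w2 w2 = 0 := by
      rw [hw2]
      simp only [minkG_add_left, minkG_add_right, minkG_smul_left, minkG_smul_right]
      rw [hG 0 0, hG 0 k, hG 0 l, hG k 0, hG l 0, hG k k, hG l l, hG k l, hG l k]
      simp [hk, hl, hkl, Ne.symm hk, Ne.symm hl, Ne.symm hkl, hkv, hlv]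
      nlinarith [hsq]
    have h3 := hnull _ hq2
    rw [hw2, map_add, map_add, map_smul] at h3
    simp only [minkG_add_left, minkG_add_right, minkG_smul_left, minkG_smul_right] at h3
    obtain ⟨h0k, hkk⟩ := hB0k k hk
    obtain ⟨h0l, hll⟩ := hB0k l hl
    have hk0 : minkG (L (eb k)) (L (eb 0)) = 0 := by rw [minkG_comm]; exact h0k
    have hl0 : minkG (L (eb l)) (L (eb 0)) = 0 := by rw [minkG_comm]; exact h0l
    have hlk : minkG (L (eb l)) (L (eb k)) = minkG (L (eb k)) (L (eb l)) := minkG_comm _ _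
    rw [h0k, h0l, hk0, hl0, hkk, hll, hlk, ← hμ] at h3
    nlinarith [hsq]
  have hBGbasis : ∀ k l, minkG (L (eb k)) (L (eb l)) = μ * minkG (eb k) (eb l) := by
    intro k l
    by_cases hkl : k = l
    · subst hkl
      by_cases hk : k = 0
      · subst hk
        rw [hG]
        simp [← hμ]
      · rw [(hB0k k hk).2, hG]
        have hkv : (k:ℕ) ≠ 0 := by
          intro h; exact hk (Fin.ext (by simpa using h))
        simp [hkv]
    · rw [hG, if_neg hkl, mul_zero]
      by_cases hk : k = 0
      · subst hk
        exact (hB0k l (Ne.symm hkl)).1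
      · by_cases hl : l = 0
        · subst hl
          rw [minkG_comm]
          exact (hB0k k hk).1
        · exact hBkl k l hk hl hkl
  have vsum : ∀ v : Fin (m+3) → ℝ, v = ∑ k, v k • eb k := by
    intro v
    funext j
    rw [Finset.sum_apply]
    rw [Finset.sum_eq_single j]
    · rw [heb]; simp
    · intro k _ hkj
      rw [heb]
      simp only [Pi.smul_apply, smul_eq_mul]
      rw [Pi.single_eq_of_ne (Ne.symm hkj)]
      ring
    · simp
  have hexp : ∀ (A : (Fin (m+3) → ℝ) →ₗ[ℝ] (Fin (m+3) → ℝ)) (v w : Fin (m+3) → ℝ),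
      minkG (A v) (A w) = ∑ k, v k * (∑ l, w l * minkG (A (eb k)) (A (eb l))) := by
    intro A v w
    have hAv : A v = ∑ k, v k • A (eb k) := by
      conv_lhs => rw [vsum v]
      rw [map_sum]
      exact Finset.sum_congr rfl fun k _ => by rw [map_smul]
    have hAw : A w = ∑ l, w l • A (eb l) := by
      conv_lhs => rw [vsum w]
      rw [map_sum]
      exact Finset.sum_congr rfl fun l _ => by rw [map_smul]
    rw [hAv, hAw, minkG_sum_left]
    exact Finset.sum_congr rfl fun k _ => by rw [minkG_sum_right]
  have hBG : ∀ v w, minkG (L v) (L w) = μ * minkG v w := by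
    intro v w
    rw [hexp L v w]
    have hid : minkG v w = ∑ k, v k * (∑ l, w l * minkG (eb k) (eb l)) := by
      have := hexp (LinearMap.id) v w
      simpa using this
    rw [hid, Finset.mul_sum]
    refine Finset.sum_congr rfl fun k _ => ?_
    have hinner : (∑ l, w l * minkG (L (eb k)) (L (eb l)))
        = μ * ∑ l, w l * minkG (eb k) (eb l) := by
      rw [Finset.mul_sum]
      refine Finset.sum_congr rfl fun l _ => ?_
      rw [hBGbasis]
      ring
    rw [hinner]
    ring
  set lam := Real.sqrt μ with hlam
  have hlampos : 0 < lam := Real.sqrt_pos.mpr hμpos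
  have hlamsq : lam * lam = μ := Real.mul_self_sqrt hμpos.le
  refine ⟨lam, F 0, lam⁻¹ • L, hlampos, ?_, ?_, ?_⟩
  · intro v w
    rw [LinearMap.smul_apply, LinearMap.smul_apply, minkG_smul_left, minkG_smul_right, hBG,
      ← hlamsq]
    field_simp
  · intro v hv
    have hftl := hFT v hv
    constructor
    · rw [LinearMap.smul_apply, minkG_smul_left, minkG_smul_right]
      have := hftl.1
      positivity
    · rw [LinearMap.smul_apply]
      have h0 : ((lam⁻¹ • L v) : Fin (m+3) → ℝ) 0 = lam⁻¹ * (L v) 0 := rfl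
      rw [h0]
      have := hftl.2
      positivity
  · intro p
    rw [hL p]
    congr 1
    rw [LinearMap.smul_apply, smul_smul, mul_inv_cancel₀ (ne_of_gt hlampos), one_smul]

end Final2

end AZ

/-- **Alexandrov–Zeeman.** For `n ≥ 3`, a bijection of Minkowski space `ℝⁿ`
which together with its inverse preserves the chronological order `p > q`
(`p - q` timelike and future pointing) is the composition of an orthochronous Poincaré
transformation with a dilation. -/
theorem alexandrov_zeeman (m : ℕ)
    (F : (Fin (m + 3) → ℝ) ≃ (Fin (m + 3) → ℝ))
    (hF : ∀ p q, FutureTimelike (p - q) → FutureTimelike (F p - F q))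
    (hFinv : ∀ p q, FutureTimelike (p - q) → FutureTimelike (F.symm p - F.symm q)) :
    ∃ (lam : ℝ) (mm : Fin (m + 3) → ℝ)
      (Λ : (Fin (m + 3) → ℝ) →ₗ[ℝ] (Fin (m + 3) → ℝ)),
      0 < lam ∧
      (∀ v w, minkG (Λ v) (Λ w) = minkG v w) ∧
      (∀ v, FutureTimelike v → FutureTimelike (Λ v)) ∧
      ∀ p, F p = lam • Λ p + mm :=
  AZ.az_main hF hFinv
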